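/- Fix λ₀ ∈ ℂ∖{0,1,−1}, let D_{λ₀} = [[λ₀,0],[0,λ₀⁻¹]], and let ε ∈ {2,−2}. Then the map A ↦ A₂₁ is a bijection from the set {A ∈ SL₂(ℂ) : tr A = 2, A ≠ 1, tr(A·D_{λ₀}) = ε} onto ℂ∖{0}. (Explicitly, each such A equals [[1−x, −x²/z],[z, 1+x]] with x = (λ₀+λ₀⁻¹−ε)/(λ₀−λ₀⁻¹) ≠ 0 and z = A₂₁.) -/
import Mathlib


open Matrix

theorem stmt7 (lam0 : ℂ) (h0 : lam0 ≠ 0) (h1 : lam0 ≠ 1) (hm1 : lam0 ≠ -1)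
    (ε : ℂ) (hε : ε = 2 ∨ ε = -2)
    (x : ℂ) (hx : x = (lam0 + lam0⁻¹ - ε) / (lam0 - lam0⁻¹)) :
    Set.BijOn (fun A : Matrix (Fin 2) (Fin 2) ℂ => A 1 0)
      {A : Matrix (Fin 2) (Fin 2) ℂ | A.det = 1 ∧ A.trace = 2 ∧ A ≠ 1 ∧
        (A * !![lam0, 0; 0, lam0⁻¹]).trace = ε}
      {z : ℂ | z ≠ 0} ∧
    x ≠ 0 ∧
    ∀ A ∈ {A : Matrix (Fin 2) (Fin 2) ℂ | A.det = 1 ∧ A.trace = 2 ∧ A ≠ 1 ∧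
        (A * !![lam0, 0; 0, lam0⁻¹]).trace = ε},
      A = !![1 - x, -x ^ 2 / (A 1 0); A 1 0, 1 + x] := by
  have hinv : lam0 * lam0⁻¹ = 1 := mul_inv_cancel₀ h0
  have hden : lam0 - lam0⁻¹ ≠ 0 := by
    intro h
    have hsq : (lam0 - 1) * (lam0 + 1) = 0 := by
      linear_combination lam0 * h + hinv
    rcases mul_eq_zero.mp hsq with h' | h'
    · exact h1 (by linear_combination h')
    · exact hm1 (by linear_combination h')
  have hx' : x * (lam0 - lam0⁻¹) = lam0 + lam0⁻¹ - ε := by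
    rw [hx, div_mul_cancel₀ _ hden]
  have hxne : x ≠ 0 := by
    intro hx0
    rw [hx0, zero_mul] at hx'
    rcases hε with rfl | rfl
    · exact h1 (by
        have hsq : (lam0 - 1) ^ 2 = 0 := by linear_combination -lam0 * hx' - hinv
        have := pow_eq_zero_iff (n := 2) (by norm_num) |>.mp hsq
        linear_combination this)
    · exact hm1 (by
        have hsq : (lam0 + 1) ^ 2 = 0 := by linear_combination -lam0 * hx' - hinv
        have := pow_eq_zero_iff (n := 2) (by norm_num) |>.mp hsq
        linear_combination this)
  have hform : ∀ A ∈ {A : Matrix (Fin 2) (Fin 2) ℂ | A.det = 1 ∧ A.trace = 2 ∧ A ≠ 1 ∧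
        (A * !![lam0, 0; 0, lam0⁻¹]).trace = ε},
      A 1 0 ≠ 0 ∧ A = !![1 - x, -x ^ 2 / (A 1 0); A 1 0, 1 + x] := by
    rintro A ⟨hdet, htr, hA1, htrD⟩
    rw [Matrix.det_fin_two] at hdet
    rw [Matrix.trace_fin_two] at htr
    simp [Matrix.trace_fin_two, Matrix.mul_apply, Fin.sum_univ_two] at htrD
    have ha : A 0 0 = 1 - x := by
      have key : (A 0 0 - (1 - x)) * (lam0 - lam0⁻¹) = 0 := by
        linear_combination htrD + hx' - lam0⁻¹ * htr
      have := (mul_eq_zero.mp key).resolve_right hden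
      linear_combination this
    have hd : A 1 1 = 1 + x := by linear_combination htr - ha
    have hbc : A 0 1 * A 1 0 = -x ^ 2 := by
      linear_combination -hdet + A 1 1 * ha + (1 - x) * hd
    have hc : A 1 0 ≠ 0 := by
      intro h
      rw [h, mul_zero] at hbc
      exact hxne (by
        have : x ^ 2 = 0 := by linear_combination hbc
        exact pow_eq_zero_iff (n := 2) (by norm_num) |>.mp this)
    refine ⟨hc, ?_⟩
    have hb : A 0 1 = -x ^ 2 / A 1 0 := by
      field_simp
      linear_combination hbc
    ext i j
    fin_cases i <;> fin_cases j <;>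
      simp [ha, hb, hd]
  refine ⟨⟨?_, ?_, ?_⟩, hxne, fun A hA => (hform A hA).2⟩
  · intro A hA
    exact (hform A hA).1
  · intro A hA B hB hAB
    have hA' := (hform A hA).2
    have hB' := (hform B hB).2
    simp only at hAB
    rw [hA', hB', hAB]
  · intro z hz
    simp only [Set.mem_setOf_eq] at hz
    refine ⟨!![1 - x, -x ^ 2 / z; z, 1 + x], ⟨?_, ?_, ?_, ?_⟩, ?_⟩
    · simp [Matrix.det_fin_two]
      field_simp
      ring
    · simp [Matrix.trace_fin_two]
      ring
    · intro h
      have : (!![1 - x, -x ^ 2 / z; z, 1 + x] : Matrix (Fin 2) (Fin 2) ℂ) 1 0 = (1 : Matrix (Fin 2) (Fin 2) ℂ) 1 0 := by rw [h]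
      simp [Matrix.one_apply] at this
      exact hz this
    · simp [Matrix.trace_fin_two, Matrix.mul_apply, Fin.sum_univ_two]
      linear_combination -hx'
    · simp
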